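/- Let v : ℝ → [0, ∞) be a convex function of class C² (so v'' is continuous and nonnegative), and define 𝒢(s) = ∫₀^s √(v''(τ)) dτ. Then for every a, b ∈ ℝ one has (v'(a) − v'(b))·(a − b) ≥ |𝒢(a) − 𝒢(b)|². -/

import Mathlib

open intervalIntegral

lemma mono_deriv_nonneg (g : ℝ → ℝ) (hm : Monotone g) (x : ℝ) : 0 ≤ deriv g x := by
  by_cases h : DifferentiableAt ℝ g x
  · have ht : Filter.Tendsto (slope g x) (nhdsWithin x {x}ᶜ) (nhds (deriv g x)) :=
      hasDerivAt_iff_tendsto_slope.mp h.hasDerivAt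
    have hsub : Set.Ioi x ⊆ ({x}ᶜ : Set ℝ) := fun y hy => ne_of_gt hy
    have ht' : Filter.Tendsto (slope g x) (nhdsWithin x (Set.Ioi x)) (nhds (deriv g x)) :=
      ht.mono_left (nhdsWithin_mono x hsub)
    refine ge_of_tendsto ht' ?_
    filter_upwards [self_mem_nhdsWithin] with y hy
    have : x < y := hy
    rw [slope_def_field, div_eq_inv_mul]
    exact mul_nonneg (inv_nonneg.2 (sub_nonneg.2 this.le)) (sub_nonneg.2 (hm this.le))
  · simp [deriv_zero_of_not_differentiableAt h]

/-- Let `v : ℝ → [0, ∞)` be a convex function of class `C²`, and define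
`𝒢(s) = ∫₀^s √(v''(τ)) dτ`. Then for every `a, b ∈ ℝ` one has
`(v'(a) − v'(b))·(a − b) ≥ |𝒢(a) − 𝒢(b)|²`. -/
theorem stmt1 (v : ℝ → ℝ) (hv0 : ∀ x, 0 ≤ v x) (hv : ContDiff ℝ 2 v)
    (hconv : ConvexOn ℝ Set.univ v) (a b : ℝ) :
    (deriv v a - deriv v b) * (a - b) ≥
      |(∫ τ in (0:ℝ)..a, Real.sqrt (deriv (deriv v) τ)) -
        (∫ τ in (0:ℝ)..b, Real.sqrt (deriv (deriv v) τ))| ^ 2 := by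
  wlog hab : b ≤ a with H
  · have h := H v hv0 hv hconv b a (le_of_not_ge hab)
    calc |(∫ τ in (0:ℝ)..a, Real.sqrt (deriv (deriv v) τ)) -
        (∫ τ in (0:ℝ)..b, Real.sqrt (deriv (deriv v) τ))| ^ 2
        = |(∫ τ in (0:ℝ)..b, Real.sqrt (deriv (deriv v) τ)) -
        (∫ τ in (0:ℝ)..a, Real.sqrt (deriv (deriv v) τ))| ^ 2 := by rw [abs_sub_comm]
      _ ≤ (deriv v b - deriv v a) * (b - a) := h
      _ = (deriv v a - deriv v b) * (a - b) := by ring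
  -- setup
  have hv1 : ContDiff ℝ 1 (deriv v) := by
    have h2 : ContDiff ℝ ((1 : ℕ∞) + 1) v := by
      convert hv using 2
      norm_num
    exact (contDiff_succ_iff_deriv.mp h2).2.2
  have hdv : Differentiable ℝ (deriv v) := hv1.differentiable one_ne_zero
  have hf_cont : Continuous (deriv (deriv v)) := hv1.continuous_deriv le_rfl
  have hmono : Monotone (deriv v) := by
    have := hconv.monotoneOn_deriv (fun x _ => (hv.differentiable (by norm_num)).differentiableAt)
    exact monotoneOn_univ.mp this
  have hf0 : ∀ x, 0 ≤ deriv (deriv v) x := mono_deriv_nonneg _ hmono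
  set f := deriv (deriv v) with hf
  set g : ℝ → ℝ := fun τ => Real.sqrt (f τ) with hg
  have hg_cont : Continuous g := hf_cont.sqrt
  have hfI : ∀ x y : ℝ, IntervalIntegrable f MeasureTheory.volume x y :=
    fun x y => hf_cont.intervalIntegrable x y
  have hgI : ∀ x y : ℝ, IntervalIntegrable g MeasureTheory.volume x y :=
    fun x y => hg_cont.intervalIntegrable x y
  set I : ℝ := ∫ τ in b..a, g τ with hI
  have hGI : (∫ τ in (0:ℝ)..a, g τ) - (∫ τ in (0:ℝ)..b, g τ) = I := by
    rw [hI, intervalIntegral.integral_interval_sub_left (hgI 0 a) (hgI 0 b)]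
  have hJ : (∫ τ in b..a, f τ) = deriv v a - deriv v b :=
    intervalIntegral.integral_deriv_eq_sub (fun x _ => (hdv x)) (hfI b a)
  rw [show (∫ τ in (0:ℝ)..a, Real.sqrt (deriv (deriv v) τ)) -
        (∫ τ in (0:ℝ)..b, Real.sqrt (deriv (deriv v) τ)) = I from hGI, sq_abs]
  rcases eq_or_lt_of_le hab with rfl | hlt
  · simp [hI]
  -- Cauchy-Schwarz
  have hL : (0:ℝ) < a - b := by linarith
  set c : ℝ := I / (a - b) with hc
  have hnn : 0 ≤ ∫ τ in b..a, (g τ - c) ^ 2 :=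
    intervalIntegral.integral_nonneg hab (fun τ _ => sq_nonneg _)
  have hexp : (∫ τ in b..a, (g τ - c) ^ 2)
      = (∫ τ in b..a, f τ) - 2 * c * I + c ^ 2 * (a - b) := by
    have hcongr : ∀ τ ∈ Set.uIcc b a, (g τ - c) ^ 2 = f τ - 2 * c * g τ + c ^ 2 := by
      intro τ _
      have hs : g τ ^ 2 = f τ := Real.sq_sqrt (hf0 τ)
      nlinarith [hs]
    rw [intervalIntegral.integral_congr hcongr,
      intervalIntegral.integral_add ((hfI b a).sub ((hgI b a).const_mul (2*c)))
        intervalIntegrable_const,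
      intervalIntegral.integral_sub (hfI b a) ((hgI b a).const_mul (2*c)),
      intervalIntegral.integral_const_mul, intervalIntegral.integral_const]
    simp only [smul_eq_mul, ← hI]
    ring
  have hcab : c * (a - b) = I := div_mul_cancel₀ _ hL.ne'
  rw [hexp] at hnn
  rw [hJ] at hnn
  nlinarith [hnn, hcab, hL, sq_nonneg (c * (a - b) - I)]
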